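/- Let M be an indecomposable well-order and let ⟨L_n⟩_{n∈ℕ} be a sequence of linear orders such that each L_n order-embeds into M and the set {n ∈ ℕ : M order-embeds into L_n} is infinite. Then the lexicographic sum Σ_{n∈ℕ} L_n is order isomorphic to Σ_{n∈ℕ} M (i.e., to the lexicographic product ℕ ×ₗ M with ℕ most significant). -/

import Mathlib

/-- A well-order `M` is *indecomposable* if for every `m : M`, `M` order-embeds into the
final segment `{x : M // m ≤ x}`. -/
def Indecomposable (M : Type*) [LinearOrder M] : Prop :=
  ∀ m : M, Nonempty (M ↪o {x : M // m ≤ x})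

/-- If `M` is an indecomposable well-order, every `L n` order-embeds into `M`, and `M`
order-embeds into infinitely many of the `L n`, then the lexicographic sum `Σ_{n∈ℕ} L n`
is order isomorphic to `Σ_{n∈ℕ} M`, i.e. to the lexicographic product `ℕ ×ₗ M`. -/
theorem statement3 {M : Type*} [LinearOrder M] [WellFoundedLT M]
    (hM : Indecomposable M) (L : ℕ → Type*) [∀ n, LinearOrder (L n)]
    (hemb : ∀ n, Nonempty (L n ↪o M))
    (hinf : {n : ℕ | Nonempty (M ↪o L n)}.Infinite) :
    Nonempty ((Σₗ n, L n) ≃o (ℕ ×ₗ M)) := by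
  classical
  have e : ∀ n, L n ↪o M := fun n => (hemb n).some
  -- forward embedding
  let F : (Σₗ n, L n) → ℕ ×ₗ M := fun p => toLex ((ofLex p).1, e (ofLex p).1 (ofLex p).2)
  have hF : StrictMono F := by
    rintro ⟨i, x⟩ ⟨j, y⟩ hab
    rcases Sigma.Lex.lt_def.mp hab with h | ⟨h, h2⟩
    · exact Prod.Lex.lt_iff.mpr (Or.inl h)
    · dsimp only at h
      subst h
      exact Prod.Lex.lt_iff.mpr (Or.inr ⟨rfl, (e i).strictMono h2⟩)
  let Femb : (Σₗ n, L n) ↪o ℕ ×ₗ M := OrderEmbedding.ofStrictMono F hF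
  -- backward embedding
  haveI : Infinite {n : ℕ | Nonempty (M ↪o L n)} := hinf.to_subtype
  let k : ℕ ≃o {n : ℕ | Nonempty (M ↪o L n)} := Nat.Subtype.orderIsoOfNat _
  have f : ∀ i : ℕ, M ↪o L ((k i : ℕ)) := fun i => (k i).2.some
  let G : (ℕ ×ₗ M) → (Σₗ n, L n) := fun p => toLex ⟨(k (ofLex p).1 : ℕ), f (ofLex p).1 (ofLex p).2⟩
  have hG : StrictMono G := by
    rintro ⟨i, x⟩ ⟨j, y⟩ hab
    rcases (show (i, x).1 < (j, y).1 ∨ (i, x).1 = (j, y).1 ∧ (i, x).2 < (j, y).2 from Prod.Lex.lt_iff.mp hab) with h | ⟨h, h2⟩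
    · exact Sigma.Lex.lt_def.mpr (Or.inl
        (show (k i : ℕ) < (k j : ℕ) from Subtype.coe_lt_coe.mpr (k.strictMono h)))
    · dsimp only at h h2
      subst h
      exact Sigma.Lex.lt_def.mpr (Or.inr ⟨rfl, (f i).strictMono h2⟩)
  let Gemb : (ℕ ×ₗ M) ↪o (Σₗ n, L n) := OrderEmbedding.ofStrictMono G hG
  -- both sides are well-orders
  haveI : WellFoundedLT (Σₗ n, L n) := ⟨Femb.ltEmbedding.wellFounded IsWellFounded.wf⟩
  -- mutual embeddability of well-orders gives isomorphism
  have h1 := Ordinal.lift_type_le.{_,_,0}.2 ⟨Femb.ltEmbedding.collapse⟩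
  have h2 := Ordinal.lift_type_le.{_,_,0}.2 ⟨Gemb.ltEmbedding.collapse⟩
  have := Ordinal.lift_type_eq.{_,_,0}.1 (le_antisymm h1 h2)
  exact this.map fun iso => OrderIso.ofRelIsoLT iso
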